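/- Let (A, D, act, add, e) be a strict change action in Cat, let G be an abelian group, and let F : A ⥤ Arr(G) be a functor. Then F is change-action differentiable with respect to the addition change action (Arr(G), Arr(G), +_G, +_G, 0), with derivative given by negating ∂F: there exists a functor δF : A × D ⥤ Arr(G), given on objects by δF(A, α) = F(act(A, α)) − F(A) and on morphisms by componentwise differences, such that: (CAD1) for every object (A, α), F(act(A, α)) = F(A) + δF(A, α), with the corresponding componentwise equations for morphisms; (CAD2, first part) δF(A, add(α, β)) = δF(A, α) + δF(act(A, α), β) on objects, with the corresponding componentwise equation on morphisms; (CAD2, second part) δF(A, e) = 0 on objects, and both components of δF(f, id_e) are 0 for every morphism f of A. -/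

import Mathlib

open CategoryTheory

/-- Objects of the arrow category `Arr(G)` of the delooping of the abelian group `G`:
elements of `G` (morphisms of `BG`). -/
abbrev Arr (G : Type*) [AddCommGroup G] : Type _ := G

/-- The arrow category of the delooping of `G`: a morphism from `a` to `b` is a pair
`(f, g)` of elements of `G` with `f + b = a + g` (a commuting square in `BG`);
composition is componentwise addition and the identity is `(0, 0)`. -/
instance arrCategory (G : Type*) [AddCommGroup G] : Category (Arr G) where
  Hom a b := {p : G × G // p.1 + b = a + p.2}
  id a := ⟨(0, 0), by abel⟩
  comp {a b c} f g := ⟨(f.1.1 + g.1.1, f.1.2 + g.1.2), by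
    have h1 := f.2
    have h2 := g.2
    calc f.1.1 + g.1.1 + c = f.1.1 + (g.1.1 + c) := by abel
      _ = f.1.1 + (b + g.1.2) := by rw [h2]
      _ = f.1.1 + b + g.1.2 := by abel
      _ = a + f.1.2 + g.1.2 := by rw [h1]
      _ = a + (f.1.2 + g.1.2) := by abel⟩
  id_comp f := by apply Subtype.ext; simp
  comp_id f := by apply Subtype.ext; simp
  assoc f g h := by apply Subtype.ext; simp [add_assoc]



section Aux
variable {G : Type} [AddCommGroup G] {A : Type} [Category A]

lemma arr_id_fst (a : Arr G) : (𝟙 a : a ⟶ a).1 = ((0 : G), (0 : G)) := rfl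

lemma arr_comp_fst {a b c : Arr G} (f : a ⟶ b) (g : b ⟶ c) :
    (f ≫ g).1 = (f.1.1 + g.1.1, f.1.2 + g.1.2) := rfl

lemma Fmap_fst_heq (F : A ⥤ Arr G) {a a' b b' : A} (ha : a = a') (hb : b = b')
    (f : a ⟶ b) (f' : a' ⟶ b') (h : HEq f f') : (F.map f).1 = (F.map f').1 := by
  subst ha; subst hb; rw [eq_of_heq h]

end Aux

/-- Given a strict change action `(A, D, act, add, e)` in `Cat` and a functor
`F : A ⥤ Arr(G)`, the negated finite difference `δF(A, α) = F(act(A, α)) − F(A)` is a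
change-action derivative of `F` with respect to the addition change action
`(Arr(G), Arr(G), +, +, 0)`: it satisfies CAD1 and CAD2. -/
theorem derivative_for_addition_change_action (G : Type) [AddCommGroup G]
    (A D : Type) [Category A] [Category D]
    (act : A × D ⥤ A) (add : D × D ⥤ D) (e : D)
    -- strict monoid laws on objects
    (hunit₁ : ∀ α : D, add.obj (α, e) = α)
    (hunit₂ : ∀ α : D, add.obj (e, α) = α)
    (hassoc : ∀ α β γ : D, add.obj (add.obj (α, β), γ) = add.obj (α, add.obj (β, γ)))
    -- strict monoid laws on morphisms
    (hunit₁m : ∀ {α β : D} (φ : α ⟶ β),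
      HEq (add.map ((φ, 𝟙 e) : ((α, e) : D × D) ⟶ (β, e))) φ)
    (hunit₂m : ∀ {α β : D} (φ : α ⟶ β),
      HEq (add.map ((𝟙 e, φ) : ((e, α) : D × D) ⟶ (e, β))) φ)
    (hassocm : ∀ {α α' β β' γ γ' : D} (φ : α ⟶ α') (ψ : β ⟶ β') (χ : γ ⟶ γ'),
      HEq (add.map ((add.map ((φ, ψ) : ((α, β) : D × D) ⟶ (α', β')), χ)
            : ((add.obj (α, β), γ) : D × D) ⟶ (add.obj (α', β'), γ')))
          (add.map ((φ, add.map ((ψ, χ) : ((β, γ) : D × D) ⟶ (β', γ')))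
            : ((α, add.obj (β, γ)) : D × D) ⟶ (α', add.obj (β', γ')))))
    -- strict action laws on objects
    (hacte : ∀ a : A, act.obj (a, e) = a)
    (hactcomp : ∀ (a : A) (α β : D),
      act.obj (act.obj (a, α), β) = act.obj (a, add.obj (α, β)))
    -- strict action laws on morphisms
    (hactem : ∀ {a b : A} (f : a ⟶ b),
      HEq (act.map ((f, 𝟙 e) : ((a, e) : A × D) ⟶ (b, e))) f)
    (hactcompm : ∀ {a b : A} {α α' β β' : D} (f : a ⟶ b) (φ : α ⟶ α') (ψ : β ⟶ β'),
      HEq (act.map ((act.map ((f, φ) : ((a, α) : A × D) ⟶ (b, α')), ψ)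
            : ((act.obj (a, α), β) : A × D) ⟶ (act.obj (b, α'), β')))
          (act.map ((f, add.map ((φ, ψ) : ((α, β) : D × D) ⟶ (α', β')))
            : ((a, add.obj (α, β)) : A × D) ⟶ (b, add.obj (α', β')))))
    (F : A ⥤ Arr G) :
    ∃ dF : (A × D) ⥤ Arr G,
      -- `δF` on objects and morphisms: componentwise differences
      (∀ p : A × D, dF.obj p = F.obj (act.obj p) - F.obj p.1) ∧
      (∀ {p q : A × D} (φ : p ⟶ q),
        (dF.map φ).1
          = ((F.map (act.map φ)).1.1 - (F.map φ.1).1.1,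
             (F.map (act.map φ)).1.2 - (F.map φ.1).1.2)) ∧
      -- CAD1 on objects: F(act(A, α)) = F(A) + δF(A, α)
      (∀ (a : A) (α : D), F.obj (act.obj (a, α)) = F.obj a + dF.obj (a, α)) ∧
      -- CAD1 on morphisms, componentwise
      (∀ {p q : A × D} (φ : p ⟶ q),
        (F.map (act.map φ)).1
          = ((F.map φ.1).1.1 + (dF.map φ).1.1,
             (F.map φ.1).1.2 + (dF.map φ).1.2)) ∧
      -- CAD2, first part, on objects
      (∀ (a : A) (α β : D),
        dF.obj (a, add.obj (α, β)) = dF.obj (a, α) + dF.obj (act.obj (a, α), β)) ∧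
      -- CAD2, first part, on morphisms, componentwise
      (∀ {a b : A} {α α' β β' : D} (f : a ⟶ b) (φ : α ⟶ α') (ψ : β ⟶ β'),
        (dF.map ((f, add.map ((φ, ψ) : ((α, β) : D × D) ⟶ (α', β')))
            : ((a, add.obj (α, β)) : A × D) ⟶ (b, add.obj (α', β')))).1
          = ((dF.map ((f, φ) : ((a, α) : A × D) ⟶ (b, α'))).1.1
              + (dF.map ((act.map ((f, φ) : ((a, α) : A × D) ⟶ (b, α')), ψ)
                  : ((act.obj (a, α), β) : A × D) ⟶ (act.obj (b, α'), β'))).1.1,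
             (dF.map ((f, φ) : ((a, α) : A × D) ⟶ (b, α'))).1.2
              + (dF.map ((act.map ((f, φ) : ((a, α) : A × D) ⟶ (b, α')), ψ)
                  : ((act.obj (a, α), β) : A × D) ⟶ (act.obj (b, α'), β'))).1.2)) ∧
      -- CAD2, second part
      (∀ a : A, dF.obj (a, e) = 0) ∧
      (∀ {a b : A} (f : a ⟶ b),
        (dF.map ((f, 𝟙 e) : ((a, e) : A × D) ⟶ (b, e))).1 = ((0 : G), (0 : G))) := by

  refine ⟨{
    obj := fun p => F.obj (act.obj p) - F.obj p.1
    map := fun {p q} φ => ⟨((F.map (act.map φ)).1.1 - (F.map φ.1).1.1,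
                            (F.map (act.map φ)).1.2 - (F.map φ.1).1.2), ?_⟩
    map_id := ?_
    map_comp := ?_ }, ?_, ?_, ?_, ?_, ?_, ?_, ?_, ?_⟩
  · have h1 := (F.map (act.map φ)).2
    have h2 := (F.map φ.1).2
    have hx1 : (F.map (act.map φ)).1.1
        = F.obj (act.obj p) + (F.map (act.map φ)).1.2 - F.obj (act.obj q) := by
      rw [eq_sub_iff_add_eq]; exact h1
    have hx2 : (F.map φ.1).1.1 = F.obj p.1 + (F.map φ.1).1.2 - F.obj q.1 := by
      rw [eq_sub_iff_add_eq]; exact h2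
    rw [hx1, hx2]; abel_nf; simp only [add_comm, add_left_comm, add_assoc, neg_smul, one_smul, add_neg_cancel_left, neg_add_cancel_left, add_neg_cancel, neg_add_cancel, add_zero]
  · intro p
    apply Subtype.ext
    have : act.map (𝟙 p) = 𝟙 (act.obj p) := act.map_id p
    simp [this, arr_id_fst]
  · intro p q r φ ψ
    apply Subtype.ext
    have h1 : act.map (φ ≫ ψ) = act.map φ ≫ act.map ψ := act.map_comp φ ψ
    have h2 : (φ ≫ ψ).1 = φ.1 ≫ ψ.1 := rfl
    simp only [h1, h2, Functor.map_comp, arr_comp_fst]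
    ext <;> dsimp <;> abel
  · intro p; rfl
  · intro p q φ; rfl
  · intro a α; dsimp; abel
  · intro p q φ; dsimp; ext <;> dsimp <;> abel
  · intro a α β
    dsimp
    rw [← hactcomp a α β]
    abel
  · intro a b α α' β β' f φ ψ
    dsimp
    have h := Fmap_fst_heq F (hactcomp a α β) (hactcomp b α' β')
      (act.map ((act.map ((f, φ) : ((a, α) : A × D) ⟶ (b, α')), ψ)
          : ((act.obj (a, α), β) : A × D) ⟶ (act.obj (b, α'), β')))
      (act.map ((f, add.map ((φ, ψ) : ((α, β) : D × D) ⟶ (α', β')))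
          : ((a, add.obj (α, β)) : A × D) ⟶ (b, add.obj (α', β'))))
      (hactcompm f φ ψ)
    have h1 := congrArg Prod.fst h
    have h2 := congrArg Prod.snd h
    dsimp at h1 h2
    rw [← h1, ← h2]
    ext <;> dsimp <;> abel
  · intro a
    dsimp
    rw [hacte a]; abel
  · intro a b f
    dsimp
    have h := Fmap_fst_heq F (hacte a) (hacte b)
      (act.map ((f, 𝟙 e) : ((a, e) : A × D) ⟶ (b, e))) f (hactem f)
    rw [h]
    ext <;> dsimp <;> abel
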